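/- Fix a real number n > 0 and define N(p) = n³/p + 6n² + n(p+1)(2p+1)/3 for real p > 0. Then there exists a unique p* > 0 such that N(p*) ≤ N(p) for all p > 0; moreover this minimizer p* is the unique positive real solution of the equation n² = p²((4/3)p + 1). -/
import Mathlib

lemma cCG_key (n : ℝ) (N : ℝ → ℝ)
    (hN : ∀ p : ℝ, N p = n ^ 3 / p + 6 * n ^ 2 + n * (p + 1) * (2 * p + 1) / 3)
    (p q : ℝ) (hp : 0 < p) (hq : 0 < q) (h : n ^ 2 = p ^ 2 * ((4 / 3) * p + 1)) :
    N q - N p = n * (q - p) ^ 2 * (2 * q + 4 * p + 3) / (3 * q) := by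
  have hn3 : n ^ 3 = n * (p ^ 2 * ((4 / 3) * p + 1)) := by rw [← h]; ring
  rw [hN q, hN p, hn3]
  field_simp
  ring

lemma cCG_root_exists (n : ℝ) (hn : 0 < n) :
    ∃ p : ℝ, 0 < p ∧ n ^ 2 = p ^ 2 * ((4 / 3) * p + 1) := by
  have hcont : ContinuousOn (fun p : ℝ => p ^ 2 * ((4 / 3) * p + 1)) (Set.Icc 0 n) := by
    fun_prop
  have hmem : n ^ 2 ∈ Set.Icc ((fun p : ℝ => p ^ 2 * ((4 / 3) * p + 1)) 0)
      ((fun p : ℝ => p ^ 2 * ((4 / 3) * p + 1)) n) := by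
    constructor
    · simp; positivity
    · simp only
      nlinarith [sq_nonneg n, hn]
  obtain ⟨c, hc, hfc⟩ := intermediate_value_Icc hn.le hcont hmem
  refine ⟨c, ?_, hfc.symm⟩
  rcases lt_or_eq_of_le hc.1 with h | h
  · exact h
  · exfalso
    simp only at hfc
    rw [← h] at hfc
    nlinarith [sq_nonneg n]

/-- For a fixed real `n > 0` and `N(p) = n³/p + 6n² + n(p+1)(2p+1)/3`
on `p > 0`, there exists a unique `p* > 0` minimizing `N` over `(0, ∞)`; moreover a
positive real `p` is this minimizer if and only if it solves `n² = p²((4/3)p + 1)`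
(so `p*` is the unique positive solution of that equation). -/
theorem cCG_unique_optimal_processor_number
    (n : ℝ) (hn : 0 < n)
    (N : ℝ → ℝ)
    (hN : ∀ p : ℝ, N p = n ^ 3 / p + 6 * n ^ 2 + n * (p + 1) * (2 * p + 1) / 3) :
    (∃! pstar : ℝ, 0 < pstar ∧ ∀ q : ℝ, 0 < q → N pstar ≤ N q) ∧
      ∀ p : ℝ, 0 < p →
        ((∀ q : ℝ, 0 < q → N p ≤ N q) ↔ n ^ 2 = p ^ 2 * ((4 / 3) * p + 1)) := by
  obtain ⟨p0, hp0, hroot⟩ := cCG_root_exists n hn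
  -- p0 is a minimizer, strictly
  have hmin : ∀ q : ℝ, 0 < q → N p0 ≤ N q := by
    intro q hq
    have hkey := cCG_key n N hN p0 q hp0 hq hroot
    have : 0 ≤ n * (q - p0) ^ 2 * (2 * q + 4 * p0 + 3) / (3 * q) := by positivity
    linarith
  have hstrict : ∀ q : ℝ, 0 < q → q ≠ p0 → N p0 < N q := by
    intro q hq hne
    have hkey := cCG_key n N hN p0 q hp0 hq hroot
    have h0 : q - p0 ≠ 0 := sub_ne_zero.mpr hne
    have h1 : 0 < (q - p0) ^ 2 := pow_pos (abs_pos.mpr h0) 2 |>.trans_le (by rw [sq_abs])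
    have : 0 < n * (q - p0) ^ 2 * (2 * q + 4 * p0 + 3) / (3 * q) := by
      apply div_pos _ (by linarith)
      apply mul_pos (mul_pos hn h1) (by linarith)
    linarith
  constructor
  · refine ⟨p0, ⟨hp0, hmin⟩, ?_⟩
    rintro y ⟨hy, hymin⟩
    by_contra hne
    exact absurd (hymin p0 hp0) (not_le.mpr (hstrict y hy hne))
  · intro p hp
    constructor
    · intro hpmin
      by_cases hne : p = p0
      · rw [hne]; exact hroot
      · exact absurd (hpmin p0 hp0) (not_le.mpr (hstrict p hp hne))
    · intro heq q hq
      have hkey := cCG_key n N hN p q hp hq heq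
      have : 0 ≤ n * (q - p) ^ 2 * (2 * q + 4 * p + 3) / (3 * q) := by positivity
      linarith
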